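/- Let p be a prime and m ≥ 1 an integer. Let 𝓘 be the set of monic irreducible polynomials I ∈ 𝔽_p[T] with I ≠ T and deg I ≤ m. Then ∏_{I ∈ 𝓘} (1 - 1/p^{deg I}) ≤ 2/(m+1). -/

import Mathlib

open Polynomial UniqueFactorizationMonoid Finset

namespace Stmt7

variable {K : Type*} [Field K] [Fintype K] [DecidableEq K]

lemma finite_natDegree_le (m : ℕ) : {A : K[X] | A.natDegree ≤ m}.Finite := by
  have hfin : Set.Finite ((fun A : K[X] => fun i : Fin (m+1) => A.coeff i) ''
      {A | A.natDegree ≤ m}) := Set.toFinite _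
  refine Set.Finite.of_finite_image hfin ?_
  intro A hA B hB h
  ext n
  rcases le_or_gt n m with hn | hn
  · exact congrFun h ⟨n, by omega⟩
  · rw [coeff_eq_zero_of_natDegree_lt (lt_of_le_of_lt hA hn),
      coeff_eq_zero_of_natDegree_lt (lt_of_le_of_lt hB hn)]

variable (K) in
noncomputable def Iset (m : ℕ) : Finset K[X] :=
  ((finite_natDegree_le m).subset (fun I hI => hI.2.2.2)).toFinset
    (s := {I : K[X] | I.Monic ∧ Irreducible I ∧ I ≠ X ∧ I.natDegree ≤ m})

variable (K) in
noncomputable def Sset (m : ℕ) : Finset K[X] :=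
  ((finite_natDegree_le m).subset (fun A hA => hA.2.1)).toFinset
    (s := {A : K[X] | A.Monic ∧ A.natDegree ≤ m ∧ ¬ (X ∣ A)})

lemma mem_Iset {m : ℕ} {I : K[X]} :
    I ∈ Iset K m ↔ I.Monic ∧ Irreducible I ∧ I ≠ X ∧ I.natDegree ≤ m := by
  simp [Iset]

lemma mem_Sset {m : ℕ} {A : K[X]} :
    A ∈ Sset K m ↔ A.Monic ∧ A.natDegree ≤ m ∧ ¬ (X ∣ A) := by
  simp [Sset]

end Stmt7

namespace Stmt7
set_option linter.unusedSectionVars false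

variable {K : Type*} [Field K] [Fintype K] [DecidableEq K]

lemma monic_of_normalizedFactor {A J : K[X]} (hJ : J ∈ normalizedFactors A) : J.Monic := by
  have h1 : J ≠ 0 := (irreducible_of_normalized_factor J hJ).ne_zero
  have h2 := normalize_normalized_factor J hJ
  rw [← h2]
  exact monic_normalize h1

lemma prod_normalizedFactors_of_monic {A : K[X]} (hA : A.Monic) :
    (normalizedFactors A).prod = A := by
  have hA0 : A ≠ 0 := hA.ne_zero
  have hassoc := prod_normalizedFactors hA0
  refine eq_of_monic_of_associated ?_ hA hassoc
  have := monic_multiset_prod_of_monic (normalizedFactors A) id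
    (fun J hJ => monic_of_normalizedFactor hJ)
  simpa using this

lemma factor_mem_Iset {m : ℕ} {A : K[X]} (hA : A ∈ Sset K m) {J : K[X]}
    (hJ : J ∈ normalizedFactors A) : J ∈ Iset K m := by
  rw [mem_Sset] at hA
  obtain ⟨hmon, hdeg, hX⟩ := hA
  have hA0 : A ≠ 0 := hmon.ne_zero
  have hdvd : J ∣ A := dvd_of_mem_normalizedFactors hJ
  refine mem_Iset.mpr ⟨monic_of_normalizedFactor hJ, irreducible_of_normalized_factor J hJ,
    ?_, le_trans (natDegree_le_of_dvd hdvd hA0) hdeg⟩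
  rintro rfl
  exact hX hdvd

lemma eq_prod_Iset {m : ℕ} {A : K[X]} (hA : A ∈ Sset K m) :
    A = ∏ I ∈ Iset K m, I ^ (normalizedFactors A).count I := by
  conv_lhs => rw [← prod_normalizedFactors_of_monic (mem_Sset.mp hA).1]
  exact Finset.prod_multiset_count_of_subset _ _
    (fun J hJ => factor_mem_Iset hA (Multiset.mem_toFinset.mp hJ))

lemma natDegree_eq_sum {m : ℕ} {A : K[X]} (hA : A ∈ Sset K m) :
    A.natDegree = ∑ I ∈ Iset K m, (normalizedFactors A).count I * I.natDegree := by
  conv_lhs => rw [eq_prod_Iset hA]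
  rw [natDegree_prod]
  · exact Finset.sum_congr rfl fun I _ => natDegree_pow I _
  · intro I hI
    exact pow_ne_zero _ (mem_Iset.mp hI).2.1.ne_zero

lemma count_le {m : ℕ} {A : K[X]} (hA : A ∈ Sset K m) {I : K[X]} (hI : I ∈ Iset K m) :
    (normalizedFactors A).count I ≤ m := by
  have h1 : 1 ≤ I.natDegree := (mem_Iset.mp hI).2.1.natDegree_pos
  calc (normalizedFactors A).count I ≤ (normalizedFactors A).count I * I.natDegree :=
        Nat.le_mul_of_pos_right _ h1
    _ ≤ ∑ J ∈ Iset K m, (normalizedFactors A).count J * J.natDegree :=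
        Finset.single_le_sum (f := fun J => (normalizedFactors A).count J * J.natDegree) (fun J _ => Nat.zero_le _) hI
    _ = A.natDegree := (natDegree_eq_sum hA).symm
    _ ≤ m := (mem_Sset.mp hA).2.1

end Stmt7

namespace Stmt7
set_option linter.unusedSectionVars false
variable {K : Type*} [Field K] [Fintype K] [DecidableEq K]


noncomputable def psi (e : ℕ) (cv : K × (Fin e → K)) : K[X] :=
  X ^ (e + 1) + (∑ i : Fin e, C (cv.2 i) * X ^ ((i : ℕ) + 1) + C cv.1)

lemma psi_deg_lt (e : ℕ) (cv : K × (Fin e → K)) :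
    (∑ i : Fin e, C (cv.2 i) * X ^ ((i : ℕ) + 1) + C cv.1).degree < ((e + 1 : ℕ) : WithBot ℕ) := by
  apply lt_of_le_of_lt (degree_add_le _ _)
  rw [max_lt_iff]
  constructor
  · apply lt_of_le_of_lt (degree_sum_le _ _)
    rw [Finset.sup_lt_iff (by exact_mod_cast WithBot.bot_lt_coe (e+1))]
    intro i _
    apply lt_of_le_of_lt (degree_C_mul_X_pow_le _ _)
    exact_mod_cast Nat.add_lt_add_right i.isLt 1
  · apply lt_of_le_of_lt (degree_C_le)
    exact_mod_cast Nat.succ_pos e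

lemma psi_monic (e : ℕ) (cv : K × (Fin e → K)) : (psi e cv).Monic :=
  monic_X_pow_add (psi_deg_lt e cv)

lemma psi_natDegree (e : ℕ) (cv : K × (Fin e → K)) : (psi e cv).natDegree = e + 1 := by
  have h : (psi e cv).degree = ((e+1 : ℕ) : WithBot ℕ) := by
    rw [psi, degree_add_eq_left_of_degree_lt, degree_X_pow]
    rw [degree_X_pow]; exact psi_deg_lt e cv
  exact natDegree_eq_of_degree_eq_some h

lemma psi_coeff_zero (e : ℕ) (cv : K × (Fin e → K)) : (psi e cv).coeff 0 = cv.1 := by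
  simp [psi, coeff_X_pow, finset_sum_coeff, coeff_C_mul_X_pow]

lemma psi_coeff_succ (e : ℕ) (cv : K × (Fin e → K)) (j : ℕ) (hj : j < e) :
    (psi e cv).coeff (j + 1) = cv.2 ⟨j, hj⟩ := by
  rw [psi]
  rw [coeff_add, coeff_add, coeff_X_pow, coeff_C, finset_sum_coeff]
  rw [Finset.sum_eq_single (⟨j, hj⟩ : Fin e)]
  · have h1 : j + 1 ≠ e + 1 := by omega
    have h2 : j + 1 ≠ 0 := by omega
    simp [coeff_C_mul_X_pow, h1, h2]
    omega
  · intro i _ hne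
    rw [coeff_C_mul_X_pow]
    have : j + 1 ≠ (i : ℕ) + 1 := by
      intro h
      exact hne (Fin.ext (show (i : ℕ) = j by omega))
    simp [this]
    intro h
    exact (this (by omega)).elim
  · simp

end Stmt7

namespace Stmt7
set_option linter.unusedSectionVars false
open Polynomial Finset
variable {K : Type*} [Field K] [Fintype K] [DecidableEq K]

lemma card_filter_ge (m e : ℕ) (he : e + 1 ≤ m) :
    (Fintype.card K - 1) * Fintype.card K ^ e ≤
      ((Sset K m).filter (fun A => A.natDegree = e + 1)).card := by
  have h := Finset.card_le_card_of_injOn (f := psi e)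
    (s := ((univ : Finset K).erase 0) ×ˢ (univ : Finset (Fin e → K)))
    (t := (Sset K m).filter fun A => A.natDegree = e + 1) ?_ ?_
  · rwa [Finset.card_product, Finset.card_erase_of_mem (Finset.mem_univ 0),
      Finset.card_univ, Finset.card_univ, Fintype.card_fun, Fintype.card_fin] at h
  · intro cv hcv
    have hc : cv.1 ≠ 0 := (Finset.mem_erase.mp (Finset.mem_product.mp hcv).1).1
    refine Finset.mem_filter.mpr ⟨mem_Sset.mpr ⟨psi_monic e cv, ?_, ?_⟩, psi_natDegree e cv⟩
    · rw [psi_natDegree]; exact he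
    · rw [X_dvd_iff, psi_coeff_zero]
      exact hc
  · intro cv _ cv' _ hpsi
    have h0 : cv.1 = cv'.1 := by
      rw [← psi_coeff_zero e cv, ← psi_coeff_zero e cv', hpsi]
    have h1 : cv.2 = cv'.2 := by
      funext i
      have := psi_coeff_succ e cv i i.isLt
      have h2 := psi_coeff_succ e cv' i i.isLt
      rw [← this, ← h2, hpsi]
    exact Prod.ext h0 h1

lemma one_mem_filter_zero (m : ℕ) :
    (1 : K[X]) ∈ (Sset K m).filter (fun A => A.natDegree = 0) := by
  refine Finset.mem_filter.mpr ⟨mem_Sset.mpr ⟨monic_one, by simp, ?_⟩, by simp⟩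
  rw [X_dvd_iff]
  simp

lemma sum_lower (m : ℕ) (hq : 2 ≤ Fintype.card K) :
    ((m : ℝ) + 1) / 2 ≤ ∑ A ∈ Sset K m, 1 / (Fintype.card K : ℝ) ^ A.natDegree := by
  set q : ℝ := (Fintype.card K : ℝ) with hqdef
  have hq2 : (2 : ℝ) ≤ q := by rw [hqdef]; exact_mod_cast hq
  have hq0 : (0 : ℝ) < q := by linarith
  rw [← Finset.sum_fiberwise_of_maps_to (g := fun A => A.natDegree)
    (t := Finset.range (m + 1)) (fun A hA => Finset.mem_range.mpr
      (Nat.lt_succ_of_le (mem_Sset.mp hA).2.1))]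
  have hstep : ∀ d ∈ Finset.range (m + 1),
      (if d = 0 then (1 : ℝ) else 1 / 2) ≤
        ∑ A ∈ (Sset K m).filter (fun A => A.natDegree = d), 1 / q ^ A.natDegree := by
    intro d hd
    have hconst : ∑ A ∈ (Sset K m).filter (fun A => A.natDegree = d), 1 / q ^ A.natDegree
        = ((Sset K m).filter (fun A => A.natDegree = d)).card * (1 / q ^ d) := by
      rw [Finset.sum_congr rfl (fun A hA => by
        rw [(Finset.mem_filter.mp hA).2]), Finset.sum_const, nsmul_eq_mul]
    rw [hconst]
    rcases Nat.eq_zero_or_pos d with rfl | hdpos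
    · rw [if_pos rfl, pow_zero]
      have hcard : 1 ≤ ((Sset K m).filter (fun A : K[X] => A.natDegree = 0)).card :=
        Finset.card_pos.mpr ⟨1, one_mem_filter_zero m⟩
      have h1 : (1 : ℝ) ≤ ((Sset K m).filter (fun A : K[X] => A.natDegree = 0)).card := by
        exact_mod_cast hcard
      calc (1 : ℝ) ≤ (((Sset K m).filter (fun A : K[X] => A.natDegree = 0)).card : ℝ) := h1
        _ = _ := by ring
    · obtain ⟨e, rfl⟩ : ∃ e, d = e + 1 := ⟨d - 1, by omega⟩
      rw [if_neg (by omega)]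
      have hcard := card_filter_ge (K := K) m e (by
        have := Finset.mem_range.mp hd; omega)
      have hcard' : ((Fintype.card K - 1) * Fintype.card K ^ e : ℕ) ≤
          (((Sset K m).filter (fun A : K[X] => A.natDegree = e + 1)).card : ℝ) := by
        exact_mod_cast hcard
      have hcast : (((Fintype.card K - 1) * Fintype.card K ^ e : ℕ) : ℝ)
          = (q - 1) * q ^ e := by
        push_cast [Nat.cast_sub (by omega : 1 ≤ Fintype.card K)]
        ring
      rw [hcast] at hcard'
      have hqe : (0 : ℝ) < q ^ (e + 1) := pow_pos hq0 _
      calc (1 : ℝ) / 2 ≤ (q - 1) / q := by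
            rw [div_le_div_iff₀ (by norm_num) hq0]; linarith
        _ = ((q - 1) * q ^ e) * (1 / q ^ (e + 1)) := by
            field_simp
            ring
        _ ≤ _ := by
            apply mul_le_mul_of_nonneg_right hcard'
            positivity
  calc ((m : ℝ) + 1) / 2 ≤ ∑ d ∈ Finset.range (m + 1), (if d = 0 then (1 : ℝ) else 1 / 2) := by
        have : ∑ d ∈ Finset.range (m + 1), (if d = 0 then (1 : ℝ) else 1 / 2)
            = ∑ d ∈ Finset.range (m + 1), ((1 : ℝ) / 2 + if d = 0 then 1 / 2 else 0) := by
          refine Finset.sum_congr rfl fun d _ => ?_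
          by_cases h : d = 0 <;> simp [h] <;> norm_num
        rw [this, Finset.sum_add_distrib, Finset.sum_const, Finset.sum_ite_eq'
          (Finset.range (m + 1)) 0 (fun _ => (1 : ℝ) / 2),
          if_pos (Finset.mem_range.mpr (Nat.succ_pos m)), Finset.card_range, nsmul_eq_mul]
        push_cast
        ring_nf
        linarith
    _ ≤ _ := Finset.sum_le_sum hstep

end Stmt7

namespace Stmt7
set_option linter.unusedSectionVars false
open Polynomial UniqueFactorizationMonoid Finset
variable {K : Type*} [Field K] [Fintype K] [DecidableEq K]

lemma geom_le_inv {x : ℝ} (h0 : 0 ≤ x) (h1 : x < 1) (n : ℕ) :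
    ∑ j ∈ Finset.range n, x ^ j ≤ (1 - x)⁻¹ := by
  have hx : (0 : ℝ) < 1 - x := by linarith
  rw [← one_div, le_div_iff₀ hx]
  nlinarith [geom_sum_mul x n, pow_nonneg h0 n]

lemma term_eq (m : ℕ) {A : K[X]} (hA : A ∈ Sset K m) :
    1 / (Fintype.card K : ℝ) ^ A.natDegree =
      ∏ x ∈ (Iset K m).attach, (1 / (Fintype.card K : ℝ) ^ x.1.natDegree) ^
        ((normalizedFactors A).count x.1) := by
  set q : ℝ := (Fintype.card K : ℝ)
  rw [Finset.prod_attach (Iset K m)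
    (fun I => (1 / q ^ I.natDegree) ^ ((normalizedFactors A).count I))]
  have h1 : ∀ I ∈ Iset K m, (1 / q ^ I.natDegree) ^ ((normalizedFactors A).count I)
      = (1 / q) ^ ((normalizedFactors A).count I * I.natDegree) := by
    intro I _
    rw [← one_div_pow, ← pow_mul, mul_comm]
  rw [Finset.prod_congr rfl h1, Finset.prod_pow_eq_pow_sum, ← natDegree_eq_sum hA,
    one_div_pow]

lemma prod_lower (m : ℕ) (hm : 1 ≤ m) (hq : 2 ≤ Fintype.card K) :
    ((m : ℝ) + 1) / 2 ≤
      ∏ I ∈ Iset K m, (1 - 1 / (Fintype.card K : ℝ) ^ I.natDegree)⁻¹ := by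
  set q : ℝ := (Fintype.card K : ℝ) with hqdef
  have hq2 : (2 : ℝ) ≤ q := by rw [hqdef]; exact_mod_cast hq
  set φ : K[X] → (∀ I ∈ Iset K m, ℕ) :=
    fun A => fun I _ => (normalizedFactors A).count I with hφ
  have step1 : ∑ A ∈ Sset K m, ∏ x ∈ (Iset K m).attach,
          (1 / q ^ x.1.natDegree) ^ (φ A x.1 x.2)
      = ∑ g ∈ (Sset K m).image φ, ∏ x ∈ (Iset K m).attach,
          (1 / q ^ x.1.natDegree) ^ (g x.1 x.2) := by
    rw [Finset.sum_image ?_]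
    intro A hA B hB h
    rw [eq_prod_Iset hA, eq_prod_Iset hB]
    refine Finset.prod_congr rfl fun I hI => ?_
    have := congrFun (congrFun h I) hI
    simp only [hφ] at this
    rw [this]
  have step2 : ∑ g ∈ (Sset K m).image φ, ∏ x ∈ (Iset K m).attach,
          (1 / q ^ x.1.natDegree) ^ (g x.1 x.2)
      ≤ ∑ g ∈ (Iset K m).pi (fun _ => Finset.range (m + 1)), ∏ x ∈ (Iset K m).attach,
          (1 / q ^ x.1.natDegree) ^ (g x.1 x.2) := by
    refine Finset.sum_le_sum_of_subset_of_nonneg ?_ ?_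
    · intro g hg
      obtain ⟨A, hA, rfl⟩ := Finset.mem_image.mp hg
      exact Finset.mem_pi.mpr fun I hI => Finset.mem_range.mpr
        (Nat.lt_succ_of_le (count_le hA hI))
    · intro g _ _
      refine Finset.prod_nonneg fun x _ => pow_nonneg (by positivity) _
  have step3 : ∑ g ∈ (Iset K m).pi (fun _ => Finset.range (m + 1)), ∏ x ∈ (Iset K m).attach,
          (1 / q ^ x.1.natDegree) ^ (g x.1 x.2)
      = ∏ I ∈ Iset K m, ∑ j ∈ Finset.range (m + 1), (1 / q ^ I.natDegree) ^ j :=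
    (Finset.prod_sum (s := Iset K m) (t := fun _ => Finset.range (m + 1))
      (f := fun I j => (1 / q ^ I.natDegree) ^ j)).symm
  have hx : ∀ I ∈ Iset K m, 0 < 1 / q ^ I.natDegree ∧ 1 / q ^ I.natDegree ≤ 1 / 2 := by
    intro I hI
    have hd : I.natDegree ≠ 0 := (mem_Iset.mp hI).2.1.natDegree_pos.ne'
    have h2 : (2 : ℝ) ≤ q ^ I.natDegree :=
      le_trans hq2 (le_self_pow₀ (by linarith) hd)
    constructor
    · positivity
    · rw [div_le_div_iff₀ (by linarith) (by norm_num)]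
      linarith
  have step4 : ∏ I ∈ Iset K m, ∑ j ∈ Finset.range (m + 1), (1 / q ^ I.natDegree) ^ j
      ≤ ∏ I ∈ Iset K m, (1 - 1 / q ^ I.natDegree)⁻¹ := by
    refine Finset.prod_le_prod ?_ ?_
    · intro I _
      exact Finset.sum_nonneg fun j _ => pow_nonneg (by positivity) _
    · intro I hI
      exact geom_le_inv (le_of_lt (hx I hI).1) (by linarith [(hx I hI).2]) _
  calc ((m : ℝ) + 1) / 2
      ≤ ∑ A ∈ Sset K m, 1 / q ^ A.natDegree := sum_lower m hq
    _ = ∑ A ∈ Sset K m, ∏ x ∈ (Iset K m).attach,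
          (1 / q ^ x.1.natDegree) ^ (φ A x.1 x.2) :=
        Finset.sum_congr rfl fun A hA => term_eq m hA
    _ = _ := step1
    _ ≤ _ := step2
    _ = _ := step3
    _ ≤ _ := step4
end Stmt7

/-- Let `𝓘` be the set of monic irreducible polynomials `I ∈ 𝔽_p[T]` with `I ≠ T` and
`deg I ≤ m`. Then `∏_{I ∈ 𝓘} (1 - 1/p^{deg I}) ≤ 2/(m+1)`. -/
theorem stmt_7 (p : ℕ) (hp : p.Prime) (m : ℕ) (hm : 1 ≤ m) :
    (∏ᶠ (I : Polynomial (ZMod p))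
        (_ : I.Monic ∧ Irreducible I ∧ I ≠ Polynomial.X ∧ I.natDegree ≤ m),
          (1 - 1 / (p : ℝ) ^ I.natDegree))
      ≤ 2 / ((m : ℝ) + 1) := by
  haveI : Fact p.Prime := ⟨hp⟩
  have hcard : Fintype.card (ZMod p) = p := ZMod.card p
  have hrw : (∏ᶠ (I : Polynomial (ZMod p))
        (_ : I.Monic ∧ Irreducible I ∧ I ≠ Polynomial.X ∧ I.natDegree ≤ m),
          (1 - 1 / (p : ℝ) ^ I.natDegree))
      = ∏ I ∈ Stmt7.Iset (ZMod p) m, (1 - 1 / (p : ℝ) ^ I.natDegree) :=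
    finprod_cond_eq_prod_of_cond_iff _ (fun {I} _ => Stmt7.mem_Iset.symm)
  rw [hrw]
  have hq : 2 ≤ Fintype.card (ZMod p) := by rw [hcard]; exact hp.two_le
  have hlow := Stmt7.prod_lower (K := ZMod p) m hm hq
  rw [hcard] at hlow
  have hm1 : (0 : ℝ) < ((m : ℝ) + 1) / 2 := by positivity
  have hfac : ∀ I ∈ Stmt7.Iset (ZMod p) m, (0 : ℝ) < 1 - 1 / (p : ℝ) ^ I.natDegree := by
    intro I hI
    have hd : I.natDegree ≠ 0 := (Stmt7.mem_Iset.mp hI).2.1.natDegree_pos.ne'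
    have hp2 : (2 : ℝ) ≤ (p : ℝ) := by exact_mod_cast hp.two_le
    have h2 : (2 : ℝ) ≤ (p : ℝ) ^ I.natDegree :=
      le_trans hp2 (le_self_pow₀ (by linarith) hd)
    have : 1 / (p : ℝ) ^ I.natDegree ≤ 1 / 2 := by
      rw [div_le_div_iff₀ (by linarith) (by norm_num)]; linarith
    linarith
  have hP : (0 : ℝ) < ∏ I ∈ Stmt7.Iset (ZMod p) m, (1 - 1 / (p : ℝ) ^ I.natDegree) :=
    Finset.prod_pos hfac
  rw [Finset.prod_inv_distrib] at hlow
  calc (∏ I ∈ Stmt7.Iset (ZMod p) m, (1 - 1 / (p : ℝ) ^ I.natDegree))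
      = ((∏ I ∈ Stmt7.Iset (ZMod p) m, (1 - 1 / (p : ℝ) ^ I.natDegree))⁻¹)⁻¹ := by
        rw [inv_inv]
    _ ≤ (((m : ℝ) + 1) / 2)⁻¹ := inv_anti₀ hm1 hlow
    _ = 2 / ((m : ℝ) + 1) := by rw [inv_div]
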